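/- For n ∈ ℕ let h_n : [0,1] → [0,1] be the (Lebesgue-measure-preserving) map h_n(x) = 2ⁿ·x (mod 1), and let C_n be the completely dependent copula with Markov kernel K_{C_n}(x,E) = 1_E(h_n(x)). Then: (i) for every x ∈ [0,1], the Markov kernel of the transposed copula C_nᵗ at x is the discrete uniform distribution on the set {x/2ⁿ + i/2ⁿ : i ∈ {0,…,2ⁿ−1}}, and these measures converge weakly to Lebesgue measure λ on [0,1] as n → ∞; hence (C_nᵗ) converges weakly conditional to the independence copula Π; (ii) D₁(C_n, Π) = 1/3 for every n ∈ ℕ, so (C_n) does not converge weakly conditional (nor with respect to D₁) to Π. In particular, weak conditional convergence is not a symmetric concept. -/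

import Mathlib

open MeasureTheory Filter Set
open scoped ENNReal

noncomputable section

/-- `C` is a bivariate copula (all conditions imposed on the unit square `[0,1]²`). -/
def IsCopula (C : ℝ → ℝ → ℝ) : Prop :=
  (∀ x ∈ Set.Icc (0:ℝ) 1, C x 0 = 0 ∧ C 0 x = 0 ∧ C x 1 = x ∧ C 1 x = x) ∧
    ∀ x₁ ∈ Set.Icc (0:ℝ) 1, ∀ x₂ ∈ Set.Icc (0:ℝ) 1, ∀ y₁ ∈ Set.Icc (0:ℝ) 1,
      ∀ y₂ ∈ Set.Icc (0:ℝ) 1, x₁ ≤ x₂ → y₁ ≤ y₂ →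
        0 ≤ C x₂ y₂ - C x₂ y₁ - C x₁ y₂ + C x₁ y₁

/-- `K` (as conditional distribution function `(x,y) ↦ K(x,[0,y])`) is a Markov kernel of
the copula `C`, i.e. a regular conditional distribution of the second coordinate given the
first under `μ_C`: for each `x ∈ [0,1]`, `K x` is the distribution function of a
probability measure on `[0,1]`, `x ↦ K x y` is measurable, and the disintegration identity
`∫_{[0,a]} K(t,[0,y]) dλ(t) = μ_C([0,a] × [0,y]) = C(a,y)` holds. -/
structure IsMarkovKernelOf (C : ℝ → ℝ → ℝ) (K : ℝ → ℝ → ℝ) : Prop where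
  meas : ∀ y ∈ Set.Icc (0:ℝ) 1, Measurable fun x => K x y
  mono : ∀ x ∈ Set.Icc (0:ℝ) 1, MonotoneOn (K x) (Set.Icc (0:ℝ) 1)
  nonneg : ∀ x ∈ Set.Icc (0:ℝ) 1, ∀ y ∈ Set.Icc (0:ℝ) 1, 0 ≤ K x y
  apply_one : ∀ x ∈ Set.Icc (0:ℝ) 1, K x 1 = 1
  disint : ∀ a ∈ Set.Icc (0:ℝ) 1, ∀ y ∈ Set.Icc (0:ℝ) 1,
    ∫ t in Set.Icc (0:ℝ) a, K t y = C a y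

/-- Weak conditional convergence of a sequence of copulas, in terms of their conditional
distribution functions: for λ-a.e. `x ∈ [0,1]` the measures `K_{C_n}(x,·)` converge weakly
to `K_C(x,·)`, i.e. the conditional distribution functions converge at every continuity
point of `y ↦ K_C(x,[0,y])` in `[0,1]`. -/
def WeakCondConv (Kseq : ℕ → ℝ → ℝ → ℝ) (K : ℝ → ℝ → ℝ) : Prop :=
  ∀ᵐ x ∂(volume.restrict (Set.Icc (0:ℝ) 1)),
    ∀ y ∈ Set.Icc (0:ℝ) 1, ContinuousWithinAt (fun t => K x t) (Set.Icc 0 1) y →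
      Filter.Tendsto (fun n => Kseq n x y) Filter.atTop (nhds (K x y))

/-- Conditional distribution function of the independence copula `Π`. -/
def piKernel : ℝ → ℝ → ℝ := fun _ y => y

/-- The metric `D₁` between two copulas, expressed via their conditional distribution
functions `K₁, K₂` (with `Kᵢ x y = K_{Cᵢ}(x,[0,y])`). -/
noncomputable def D1 (K1 K2 : ℝ → ℝ → ℝ) : ℝ :=
  ∫ y in Set.Icc (0:ℝ) 1, ∫ x in Set.Icc (0:ℝ) 1, |K1 x y - K2 x y|

/-- The map `h_n(x) = 2ⁿ · x (mod 1)`. -/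
noncomputable def hmap (n : ℕ) (x : ℝ) : ℝ := Int.fract (2 ^ n * x)

/-- Conditional distribution function of the completely dependent copula `C_n` induced by
`h_n`: `K_{C_n}(x,[0,y]) = 1_{[0,y]}(h_n(x))`. -/
noncomputable def cdKernel (n : ℕ) (x y : ℝ) : ℝ := if hmap n x ≤ y then 1 else 0

/-- The completely dependent copula `C_n` induced by `h_n`:
`C_n(a,y) = λ({t ∈ [0,a] : h_n(t) ≤ y})`. -/
noncomputable def cdCopula (n : ℕ) (a y : ℝ) : ℝ :=
  (volume {t | t ∈ Set.Icc (0:ℝ) a ∧ hmap n t ≤ y}).toReal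

/-- The transposed copula `C_nᵗ(x,y) = C_n(y,x)`. -/
noncomputable def cdCopulaT (n : ℕ) (x y : ℝ) : ℝ := cdCopula n y x

/-- Conditional distribution function of the transposed copula `C_nᵗ`: at `x` it is the
distribution function of the discrete uniform distribution on
`{(x+i)/2ⁿ : i ∈ {0,…,2ⁿ−1}}`. -/
noncomputable def cdKernelT (n : ℕ) (x y : ℝ) : ℝ :=
  (∑ i ∈ Finset.range (2 ^ n), if (x + (i:ℝ)) / 2 ^ n ≤ y then (1:ℝ) else 0) / 2 ^ n

/-- The discrete uniform distribution on `{(x+i)/2ⁿ : i ∈ {0,…,2ⁿ−1}}`. -/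
noncomputable def cdMeasureT (n : ℕ) (x : ℝ) : Measure ℝ :=
  ((2:ℝ≥0∞) ^ n)⁻¹ • ∑ i ∈ Finset.range (2 ^ n), Measure.dirac ((x + (i:ℝ)) / 2 ^ n)

/-! ### Auxiliary lemmas -/


lemma two_pow_pos' (n : ℕ) : (0:ℝ) < 2 ^ n := by positivity

lemma clamp_eq (u v : ℝ) (hu : 0 ≤ u) : max 0 (min u v) = min u (max 0 v) := by
  rcases le_total v 0 with h | h
  · rw [max_eq_left (le_trans (min_le_right u v) h), max_eq_left h, min_eq_right hu]
  · rw [max_eq_right h, max_eq_right (le_min hu h)]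

lemma ofReal_eq_ofReal_max (x : ℝ) : ENNReal.ofReal x = ENNReal.ofReal (max 0 x) := by
  rcases le_total 0 x with h | h
  · rw [max_eq_right h]
  · rw [max_eq_left h, ENNReal.ofReal_of_nonpos h, ENNReal.ofReal_zero]

lemma core (n : ℕ) {a y : ℝ} (ha : a ∈ Icc (0:ℝ) 1) (hy : y ∈ Icc (0:ℝ) 1) :
    volume {t | t ∈ Icc (0:ℝ) y ∧ hmap n t ≤ a}
      = ENNReal.ofReal (∑ i ∈ Finset.range (2 ^ n), min a (max 0 (2 ^ n * y - i)) / 2 ^ n) := by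
  obtain ⟨ha0, ha1⟩ := ha
  obtain ⟨hy0, hy1⟩ := hy
  have h2 : (0:ℝ) < 2 ^ n := two_pow_pos' n
  set U : Set ℝ := ⋃ i ∈ Finset.range (2 ^ n), Icc ((i:ℝ)/2^n) (min (((i:ℝ)+a)/2^n) y) with hU
  have hUS : U ⊆ {t | t ∈ Icc (0:ℝ) y ∧ hmap n t ≤ a} := by
    intro t ht
    simp only [hU, mem_iUnion, Finset.mem_range] at ht
    obtain ⟨i, hi, h1, h2'⟩ := ht
    have hti : (i:ℝ) ≤ 2 ^ n * t := by
      rw [div_le_iff₀ h2] at h1; linarith [h1]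
    have hta : 2 ^ n * t ≤ (i:ℝ) + a := by
      have := le_trans h2' (min_le_left _ _)
      rw [le_div_iff₀ h2] at this; linarith
    refine ⟨⟨le_trans (by positivity) h1, le_trans h2' (min_le_right _ _)⟩, ?_⟩
    rcases lt_or_ge (2 ^ n * t) ((i:ℝ) + 1) with hlt | hge
    · have hfl : ⌊2 ^ n * t⌋ = (i:ℤ) := by
        rw [Int.floor_eq_iff]
        constructor <;> push_cast <;> linarith
      unfold hmap
      rw [Int.fract, hfl]
      push_cast; linarith
    · have he : 2 ^ n * t = (i:ℝ) + 1 := le_antisymm (by linarith) hge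
      have ha1' : (1:ℝ) ≤ a := by linarith
      unfold hmap
      rw [he]
      have : ((i:ℝ) + 1) = ((i + 1 : ℕ) : ℝ) := by push_cast; ring
      rw [this, Int.fract_natCast]
      linarith
  have hSU : {t | t ∈ Icc (0:ℝ) y ∧ hmap n t ≤ a} ⊆ U ∪ {y} := by
    intro t ⟨⟨ht0, hty⟩, hfr⟩
    rcases eq_or_lt_of_le hty with rfl | hty'
    · exact Or.inr rfl
    left
    have ht1 : t < 1 := lt_of_lt_of_le hty' hy1
    set i : ℕ := ⌊2 ^ n * t⌋.toNat with hi
    have hflnn : (0:ℤ) ≤ ⌊2 ^ n * t⌋ := Int.floor_nonneg.2 (by positivity)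
    have hic : ((i:ℤ)) = ⌊2 ^ n * t⌋ := Int.toNat_of_nonneg hflnn
    have hicr : ((i:ℝ)) = (⌊2 ^ n * t⌋ : ℝ) := by exact_mod_cast congrArg (fun z : ℤ => (z:ℝ)) hic
    have hile : (i:ℝ) ≤ 2 ^ n * t := by rw [hicr]; exact Int.floor_le _
    have hfr' : 2 ^ n * t - i ≤ a := by
      rw [hicr]; exact hfr
    have hlt2 : 2 ^ n * t < 2 ^ n := by nlinarith
    have hin : i < 2 ^ n := by
      have : (i:ℝ) < 2 ^ n := lt_of_le_of_lt hile hlt2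
      exact_mod_cast this
    simp only [hU, mem_iUnion, Finset.mem_range]
    exact ⟨i, hin, ⟨by rw [div_le_iff₀ h2]; linarith, le_min (by rw [le_div_iff₀ h2]; linarith) hty⟩⟩
  have hmeasU : volume U = ENNReal.ofReal
      (∑ i ∈ Finset.range (2 ^ n), min a (max 0 (2 ^ n * y - i)) / 2 ^ n) := by
    rw [hU, measure_biUnion_finset₀ ?_ (fun i _ => measurableSet_Icc.nullMeasurableSet)]
    · rw [ENNReal.ofReal_sum_of_nonneg (fun i _ => by positivity)]
      refine Finset.sum_congr rfl (fun i _ => ?_)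
      rw [Real.volume_Icc]
      have key : min (((i:ℝ)+a)/2^n) y - (i:ℝ)/2^n = min (a/2^n) (y - (i:ℝ)/2^n) := by
        rw [← min_sub_sub_right]; ring_nf
      rw [ofReal_eq_ofReal_max, key, clamp_eq _ _ (by positivity)]
      congr 1
      rw [← min_div_div_right h2.le a, ← max_div_div_right h2.le 0, zero_div]
      have : y - (i:ℝ)/2^n = (2^n*y - i)/2^n := by field_simp
      rw [this]
    · have aux : ∀ i j : ℕ, i < j →
          volume (Icc ((i:ℝ)/2^n) (min (((i:ℝ)+a)/2^n) y) ∩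
            Icc ((j:ℝ)/2^n) (min (((j:ℝ)+a)/2^n) y)) = 0 := by
        intro i j hij
        have hsub : Icc ((i:ℝ)/2^n) (min (((i:ℝ)+a)/2^n) y) ∩
            Icc ((j:ℝ)/2^n) (min (((j:ℝ)+a)/2^n) y) ⊆
            Icc ((j:ℝ)/2^n) (((i:ℝ)+a)/2^n) := fun t ⟨h1, h3⟩ =>
          ⟨h3.1, le_trans h1.2 (min_le_left _ _)⟩
        refine le_antisymm (le_trans (measure_mono hsub) (le_of_eq ?_)) zero_le
        rw [Real.volume_Icc, ENNReal.ofReal_of_nonpos]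
        have hj : (i:ℝ) + 1 ≤ j := by exact_mod_cast hij
        have : ((i:ℝ) + a) / 2 ^ n ≤ (j:ℝ) / 2 ^ n :=
          (div_le_div_iff_of_pos_right h2).mpr (by linarith)
        linarith
      intro i hi j hj hij
      rcases Ne.lt_or_gt hij with h | h
      · exact aux i j h
      · rw [Function.onFun, AEDisjoint, inter_comm]; exact aux j i h
  rw [le_antisymm (le_trans (measure_mono hSU) ?_) (measure_mono hUS), hmeasU]
  calc volume (U ∪ {y}) ≤ volume U + volume {y} := measure_union_le _ _
    _ = volume U := by simp

lemma hmap_measurable (n : ℕ) : Measurable (hmap n) :=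
  measurable_fract.comp (measurable_const_mul _)

lemma hmap_nonneg (n : ℕ) (x : ℝ) : 0 ≤ hmap n x := Int.fract_nonneg _
lemma hmap_lt_one (n : ℕ) (x : ℝ) : hmap n x < 1 := Int.fract_lt_one _

lemma volume_hmap_le (n : ℕ) {y : ℝ} (hy : y ∈ Icc (0:ℝ) 1) :
    volume {t | t ∈ Icc (0:ℝ) 1 ∧ hmap n t ≤ y} = ENNReal.ofReal y := by
  rw [core n hy (by constructor <;> norm_num)]
  congr 1
  have h2 : (0:ℝ) < 2 ^ n := by positivity
  have : ∀ i ∈ Finset.range (2 ^ n), min y (max 0 (2 ^ n * 1 - (i:ℝ))) / 2 ^ n = y / 2 ^ n := by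
    intro i hi
    have hi' : (i:ℝ) ≤ 2 ^ n - 1 := by
      have : (i:ℝ) + 1 ≤ 2 ^ n := by exact_mod_cast Finset.mem_range.1 hi
      linarith
    rw [max_eq_right (by linarith), min_eq_left (by linarith [hy.2])]
  rw [Finset.sum_congr rfl this, Finset.sum_const, Finset.card_range, nsmul_eq_mul]
  field_simp
  push_cast; ring

lemma hmap_measurePreserving (n : ℕ) : MeasurePreserving (hmap n)
    (volume.restrict (Set.Icc (0:ℝ) 1)) (volume.restrict (Set.Icc (0:ℝ) 1)) := by
  refine ⟨hmap_measurable n, ?_⟩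
  haveI : IsFiniteMeasure ((volume.restrict (Icc (0:ℝ) 1)).map (hmap n)) := by
    constructor
    rw [Measure.map_apply (hmap_measurable n) MeasurableSet.univ, preimage_univ,
      Measure.restrict_apply_univ]
    exact measure_Icc_lt_top
  refine Measure.ext_of_Iic _ _ (fun y => ?_)
  rw [Measure.map_apply (hmap_measurable n) measurableSet_Iic,
    Measure.restrict_apply (hmap_measurable n measurableSet_Iic),
    Measure.restrict_apply measurableSet_Iic]
  rcases lt_or_ge y 0 with hy | hy
  · have h1 : hmap n ⁻¹' Iic y ∩ Icc 0 1 = ∅ := by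
      ext t; simp only [mem_inter_iff, mem_preimage, mem_Iic, mem_empty_iff_false, iff_false]
      rintro ⟨h, _⟩; exact absurd (lt_of_le_of_lt h hy) (not_lt.2 (hmap_nonneg n t))
    have h2 : Iic y ∩ Icc (0:ℝ) 1 = ∅ := by
      ext t; simp only [mem_inter_iff, mem_Iic, mem_Icc, mem_empty_iff_false, iff_false]
      rintro ⟨h, h0, _⟩; linarith
    rw [h1, h2]
  rcases le_or_gt y 1 with hy1 | hy1
  · have h1 : hmap n ⁻¹' Iic y ∩ Icc 0 1 = {t | t ∈ Icc (0:ℝ) 1 ∧ hmap n t ≤ y} := by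
      ext t; simp [and_comm]
    have h2 : Iic y ∩ Icc (0:ℝ) 1 = Icc 0 y := by
      ext t; simp only [mem_inter_iff, mem_Iic, mem_Icc]
      constructor
      · rintro ⟨h, h0, _⟩; exact ⟨h0, h⟩
      · rintro ⟨h0, h⟩; exact ⟨h, h0, le_trans h hy1⟩
    rw [h1, h2, volume_hmap_le n ⟨hy, hy1⟩, Real.volume_Icc, sub_zero]
  · have h1 : hmap n ⁻¹' Iic y ∩ Icc 0 1 = Icc 0 1 :=
      inter_eq_right.2 (fun t _ => le_trans (hmap_lt_one n t).le (by simpa using hy1.le))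
    have h2 : Iic y ∩ Icc (0:ℝ) 1 = Icc 0 1 :=
      inter_eq_right.2 (fun t ht => le_trans ht.2 hy1.le)
    rw [h1, h2]

lemma cdKernel_markov (n : ℕ) :
    (∀ y ∈ Set.Icc (0:ℝ) 1, Measurable fun x => cdKernel n x y) ∧
    (∀ a ∈ Set.Icc (0:ℝ) 1, ∀ y ∈ Set.Icc (0:ℝ) 1,
      ∫ t in Set.Icc (0:ℝ) a, cdKernel n t y = cdCopula n a y) := by
  constructor
  · intro y _
    exact Measurable.ite (measurableSet_le (hmap_measurable n) measurable_const)
      measurable_const measurable_const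
  · intro a _ y _
    have heq : ∀ t, cdKernel n t y = Set.indicator {s | hmap n s ≤ y} (fun _ => (1:ℝ)) t := by
      intro t; simp [cdKernel, Set.indicator, mem_setOf_eq]
    simp_rw [heq]
    rw [integral_indicator_const (1:ℝ) (measurableSet_le (hmap_measurable n) measurable_const),
      measureReal_def, Measure.restrict_apply (measurableSet_le (hmap_measurable n) measurable_const)]
    rw [smul_eq_mul, mul_one, cdCopula]
    congr 2
    ext t; simp [and_comm]

lemma indic_eq (c : ℝ) : (fun t : ℝ => if t ≤ c then (1:ℝ) else 0)
    = (Iic c).indicator (fun _ => (1:ℝ)) := by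
  ext t; simp [Set.indicator, Set.mem_Iic]

lemma integrableOn_indic (c a : ℝ) :
    IntegrableOn (fun t : ℝ => if t ≤ c then (1:ℝ) else 0) (Icc 0 a) volume := by
  rw [indic_eq, IntegrableOn, integrable_indicator_iff measurableSet_Iic]
  refine integrableOn_const ?_
  rw [Measure.restrict_apply measurableSet_Iic]
  exact (lt_of_le_of_lt (measure_mono inter_subset_right) measure_Icc_lt_top).ne

lemma integral_indic (c a : ℝ) (ha : 0 ≤ a) :
    ∫ t in Icc (0:ℝ) a, (if t ≤ c then (1:ℝ) else 0) = min a (max 0 c) := by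
  rw [indic_eq, MeasureTheory.integral_indicator measurableSet_Iic]
  rw [setIntegral_const, measureReal_def, Measure.restrict_apply measurableSet_Iic]
  have hset : Iic c ∩ Icc (0:ℝ) a = Icc 0 (min a c) := by
    ext t; simp only [mem_inter_iff, mem_Iic, mem_Icc, le_min_iff]
    tauto
  rw [hset, Real.volume_Icc, sub_zero, ofReal_eq_ofReal_max,
    ENNReal.toReal_ofReal (le_max_left _ _), clamp_eq a c ha, smul_eq_mul, mul_one]

lemma cdKernelT_rewrite (n : ℕ) (y : ℝ) (t : ℝ) :
    cdKernelT n t y = ∑ i ∈ Finset.range (2 ^ n),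
      (if t ≤ 2 ^ n * y - (i:ℝ) then (1:ℝ) else 0) / 2 ^ n := by
  have h2 : (0:ℝ) < 2 ^ n := by positivity
  rw [cdKernelT, Finset.sum_div]
  refine Finset.sum_congr rfl (fun i _ => ?_)
  congr 1
  refine if_congr ?_ rfl rfl
  rw [div_le_iff₀ h2]
  constructor <;> intro h <;> linarith

lemma cdKernelT_disint (n : ℕ) {a y : ℝ} (ha : a ∈ Icc (0:ℝ) 1) (hy : y ∈ Icc (0:ℝ) 1) :
    ∫ t in Set.Icc (0:ℝ) a, cdKernelT n t y = cdCopulaT n a y := by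
  have h2 : (0:ℝ) < 2 ^ n := by positivity
  simp_rw [cdKernelT_rewrite n y]
  rw [integral_finset_sum]
  case hf => exact fun i _ => (integrableOn_indic (2 ^ n * y - i) a).div_const _
  have : ∀ i ∈ Finset.range (2 ^ n),
      ∫ t in Icc (0:ℝ) a, (if t ≤ 2 ^ n * y - (i:ℝ) then (1:ℝ) else 0) / 2 ^ n
        = min a (max 0 (2 ^ n * y - i)) / 2 ^ n := by
    intro i _
    rw [integral_div, integral_indic _ _ ha.1]
  rw [Finset.sum_congr rfl this, cdCopulaT, cdCopula, core n ha hy,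
    ENNReal.toReal_ofReal]
  exact Finset.sum_nonneg (fun i _ => div_nonneg (le_min ha.1 (le_max_left _ _)) (by positivity))

lemma cdKernelT_measurable (n : ℕ) (y : ℝ) : Measurable fun x => cdKernelT n x y := by
  unfold cdKernelT
  refine Measurable.div_const (Finset.measurable_sum _ (fun i _ => ?_)) _
  exact Measurable.ite (measurableSet_le (by measurability) measurable_const)
    measurable_const measurable_const

lemma cdKernelT_apply_one (n : ℕ) {x : ℝ} (hx : x ∈ Icc (0:ℝ) 1) : cdKernelT n x 1 = 1 := by
  have h2 : (0:ℝ) < 2 ^ n := by positivity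
  rw [cdKernelT]
  have : ∀ i ∈ Finset.range (2 ^ n), (if (x + (i:ℝ)) / 2 ^ n ≤ 1 then (1:ℝ) else 0) = 1 := by
    intro i hi
    have hi' : (i:ℝ) + 1 ≤ 2 ^ n := by exact_mod_cast Finset.mem_range.1 hi
    rw [if_pos]
    rw [div_le_one h2]
    linarith [hx.2]
  rw [Finset.sum_congr rfl this, Finset.sum_const, Finset.card_range, nsmul_eq_mul, mul_one]
  push_cast
  exact div_self h2.ne'

lemma cdMeasureT_eval (n : ℕ) {x y : ℝ} (hx : x ∈ Icc (0:ℝ) 1) (hy : y ∈ Icc (0:ℝ) 1) :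
    (cdMeasureT n x (Set.Icc (0:ℝ) y)).toReal = cdKernelT n x y := by
  rw [cdMeasureT, Measure.smul_apply, Measure.coe_finset_sum, Finset.sum_apply]
  have hdir : ∀ i ∈ Finset.range (2 ^ n),
      Measure.dirac ((x + (i:ℝ)) / 2 ^ n) (Icc (0:ℝ) y)
        = if (x + (i:ℝ)) / 2 ^ n ≤ y then (1:ℝ≥0∞) else 0 := by
    intro i _
    rw [Measure.dirac_apply' _ measurableSet_Icc]
    by_cases h : (x + (i:ℝ)) / 2 ^ n ≤ y
    · rw [if_pos h, indicator_of_mem (Set.mem_Icc.2 ⟨div_nonneg (by have := hx.1; positivity) (by positivity), h⟩)]; rfl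
    · rw [if_neg h, indicator_of_notMem (fun hc => h hc.2)]
  rw [Finset.sum_congr rfl hdir, smul_eq_mul, ENNReal.toReal_mul, ENNReal.toReal_sum
    (fun i _ => by split_ifs <;> simp)]
  have : ∀ i ∈ Finset.range (2 ^ n),
      ((if (x + (i:ℝ)) / 2 ^ n ≤ y then (1:ℝ≥0∞) else 0)).toReal
        = if (x + (i:ℝ)) / 2 ^ n ≤ y then (1:ℝ) else 0 := by
    intro i _; split_ifs <;> simp
  rw [Finset.sum_congr rfl this, cdKernelT, div_eq_mul_inv, mul_comm]
  congr 1
  rw [ENNReal.toReal_inv]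
  norm_num

lemma half_pow_small {δ : ℝ} (hδ : 0 < δ) : ∃ N : ℕ, ∀ n ≥ N, (1:ℝ)/2^n < δ := by
  obtain ⟨N, hN⟩ := exists_pow_lt_of_lt_one hδ (by norm_num : (1:ℝ)/2 < 1)
  refine ⟨N, fun n hn => ?_⟩
  calc (1:ℝ)/2^n = (1/2)^n := by rw [div_pow, one_pow]
    _ ≤ (1/2)^N := pow_le_pow_of_le_one (by norm_num) (by norm_num) hn
    _ < δ := hN

lemma riemann_sum_tendsto {x : ℝ} (hx : x ∈ Icc (0:ℝ) 1) (f : BoundedContinuousFunction ℝ ℝ) :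
    Tendsto (fun n => (∑ i ∈ Finset.range (2 ^ n), f ((x + (i:ℝ)) / 2 ^ n)) / 2 ^ n)
      atTop (nhds (∫ t in Icc (0:ℝ) 1, f t)) := by
  rw [Metric.tendsto_atTop]
  intro ε hε
  have huc : UniformContinuousOn f (Icc (0:ℝ) 1) :=
    isCompact_Icc.uniformContinuousOn_of_continuous f.continuous.continuousOn
  rw [Metric.uniformContinuousOn_iff] at huc
  obtain ⟨δ, hδ, hucδ⟩ := huc (ε/2) (by linarith)
  obtain ⟨N, hN⟩ := half_pow_small hδ
  refine ⟨N, fun n hn => ?_⟩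
  have h2 : (0:ℝ) < 2 ^ n := by positivity
  have hmesh : (1:ℝ)/2^n < δ := hN n hn
  set a : ℕ → ℝ := fun k => (k:ℝ)/2^n with ha
  have hI : ∫ t in Icc (0:ℝ) 1, f t = ∑ i ∈ Finset.range (2 ^ n), ∫ t in a i..a (i+1), f t := by
    rw [intervalIntegral.sum_integral_adjacent_intervals
      (fun k _ => f.continuous.intervalIntegrable _ _)]
    have h0 : a 0 = 0 := by simp [ha]
    have h1 : a (2^n) = 1 := by rw [ha]; push_cast; exact div_self h2.ne'
    rw [h0, h1, intervalIntegral.integral_of_le (by norm_num : (0:ℝ) ≤ 1),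
      MeasureTheory.integral_Icc_eq_integral_Ioc]
  have hS : (∑ i ∈ Finset.range (2 ^ n), f ((x + (i:ℝ)) / 2 ^ n)) / 2 ^ n
      = ∑ i ∈ Finset.range (2 ^ n), f ((x + (i:ℝ)) / 2 ^ n) / 2^n := Finset.sum_div _ _ _
  rw [hS, hI, Real.dist_eq, ← Finset.sum_sub_distrib]
  have key : ∀ i ∈ Finset.range (2^n),
      |f ((x + (i:ℝ)) / 2 ^ n) / 2^n - ∫ t in a i..a (i+1), f t| ≤ ε/2 * (1/2^n) := by
    intro i hi
    have hin : (i:ℝ) + 1 ≤ 2^n := by exact_mod_cast Finset.mem_range.1 hi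
    have hale : a i ≤ a (i+1) := by
      rw [ha]; push_cast; exact (div_le_div_iff_of_pos_right h2).mpr (by linarith)
    have htag_mem : (x + (i:ℝ)) / 2 ^ n ∈ Icc (a i) (a (i+1)) := by
      rw [ha]; constructor
      · push_cast; exact (div_le_div_iff_of_pos_right h2).mpr (by linarith [hx.1])
      · push_cast; exact (div_le_div_iff_of_pos_right h2).mpr (by linarith [hx.2])
    have htag01 : (x + (i:ℝ)) / 2 ^ n ∈ Icc (0:ℝ) 1 := by
      constructor
      · exact le_trans (by positivity) htag_mem.1
      · refine le_trans htag_mem.2 ?_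
        rw [ha, div_le_one h2]; push_cast; linarith
    have hconst : f ((x + (i:ℝ)) / 2 ^ n) / 2^n
        = ∫ _ in a i..a (i+1), f ((x + (i:ℝ)) / 2 ^ n) := by
      rw [intervalIntegral.integral_const, smul_eq_mul]
      have : a (i+1) - a i = 1/2^n := by rw [ha]; push_cast; field_simp; ring
      rw [this]; ring
    rw [hconst, ← intervalIntegral.integral_sub (intervalIntegrable_const)
      (f.continuous.intervalIntegrable _ _)]
    have := intervalIntegral.norm_integral_le_of_norm_le_const (C := ε/2)
      (f := fun t => f ((x + (i:ℝ)) / 2 ^ n) - f t) (a := a i) (b := a (i+1)) ?_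
    · refine le_trans this (le_of_eq ?_)
      rw [abs_of_nonneg (by linarith), ha]
      push_cast
      have : ((i:ℝ)+1)/2^n - (i:ℝ)/2^n = 1/2^n := by field_simp; ring
      rw [this]
    · intro t ht
      rw [uIoc_of_le hale] at ht
      have ht01 : t ∈ Icc (0:ℝ) 1 := by
        constructor
        · exact le_trans (le_trans (by positivity : (0:ℝ) ≤ a i) ht.1.le) le_rfl
        · refine le_trans ht.2 ?_
          rw [ha, div_le_one h2]; push_cast; linarith
      have hdist : dist ((x + (i:ℝ)) / 2 ^ n) t < δ := by
        rw [Real.dist_eq, abs_sub_lt_iff]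
        have h1' := htag_mem.1
        have h2' := htag_mem.2
        have h3' := ht.1
        have h4' := ht.2
        have hlen : a (i+1) - a i = 1/2^n := by rw [ha]; push_cast; field_simp; ring
        constructor <;> nlinarith [hmesh, h2.le]
      have := hucδ _ htag01 _ ht01 hdist
      rw [Real.dist_eq] at this
      exact le_of_lt this
  calc |∑ i ∈ Finset.range (2^n), (f ((x + (i:ℝ)) / 2 ^ n) / 2^n - ∫ t in a i..a (i+1), f t)|
      ≤ ∑ i ∈ Finset.range (2^n), |f ((x + (i:ℝ)) / 2 ^ n) / 2^n - ∫ t in a i..a (i+1), f t| :=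
        Finset.abs_sum_le_sum_abs _ _
    _ ≤ ∑ _i ∈ Finset.range (2^n), ε/2 * (1/2^n) := Finset.sum_le_sum key
    _ < ε := by
        rw [Finset.sum_const, Finset.card_range, nsmul_eq_mul]
        push_cast
        rw [mul_comm, mul_assoc]
        rw [show (1:ℝ)/2^n * 2^n = 1 by field_simp]
        linarith

lemma integral_cdMeasureT (n : ℕ) (x : ℝ) (f : BoundedContinuousFunction ℝ ℝ) :
    ∫ t, f t ∂(cdMeasureT n x)
      = (∑ i ∈ Finset.range (2 ^ n), f ((x + (i:ℝ)) / 2 ^ n)) / 2 ^ n := by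
  rw [cdMeasureT, integral_smul_measure,
    integral_finset_sum_measure (fun i _ => f.integrable _)]
  simp_rw [integral_dirac]
  rw [smul_eq_mul, ENNReal.toReal_inv, div_eq_mul_inv, mul_comm]
  norm_num

lemma sum_ite_eq_card (c : ℝ) (N : ℕ) :
    ∑ i ∈ Finset.range N, (if (i:ℝ) ≤ c then (1:ℝ) else 0)
      = (((Finset.range N).filter (fun i : ℕ => (i:ℝ) ≤ c)).card : ℝ) := by
  rw [Finset.sum_ite]
  simp

lemma cdKernelT_tendsto {x y : ℝ} (hx : x ∈ Icc (0:ℝ) 1) (hy : y ∈ Icc (0:ℝ) 1) :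
    Tendsto (fun n => cdKernelT n x y) atTop (nhds y) := by
  classical
  have hinv : Tendsto (fun n : ℕ => (1:ℝ)/2^n) atTop (nhds 0) := by
    have := tendsto_pow_atTop_nhds_zero_of_lt_one (by norm_num : (0:ℝ) ≤ 1/2) (by norm_num)
    simpa [div_pow] using this
  have hlow : Tendsto (fun n : ℕ => y - 1/2^n) atTop (nhds y) := by
    simpa using tendsto_const_nhds.sub hinv
  have hup : Tendsto (fun n : ℕ => y + 1/2^n) atTop (nhds y) := by
    simpa using tendsto_const_nhds.add hinv
  refine tendsto_of_tendsto_of_tendsto_of_le_of_le hlow hup (fun n => ?_) (fun n => ?_)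
  · -- lower bound
    have h2 : (0:ℝ) < 2 ^ n := by positivity
    set c : ℝ := 2^n * y - 1 with hc
    have step1 : (∑ i ∈ Finset.range (2 ^ n), if (i:ℝ) ≤ c then (1:ℝ) else 0)
        ≤ ∑ i ∈ Finset.range (2 ^ n), if (x + (i:ℝ)) / 2 ^ n ≤ y then (1:ℝ) else 0 := by
      refine Finset.sum_le_sum (fun i _ => ?_)
      by_cases h : (i:ℝ) ≤ c
      · rw [if_pos h, if_pos]
        rw [div_le_iff₀ h2]
        have := hx.2
        rw [hc] at h
        linarith
      · rw [if_neg h]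
        split_ifs <;> norm_num
    have step2 : 2^n * y - 1 ≤ ∑ i ∈ Finset.range (2 ^ n), if (i:ℝ) ≤ c then (1:ℝ) else 0 := by
      rw [sum_ite_eq_card]
      rcases lt_or_ge c 0 with hcn | hcp
      · have : (0:ℝ) ≤ ((Finset.range (2^n)).filter (fun i : ℕ => (i:ℝ) ≤ c)).card := by positivity
        rw [hc] at hcn; linarith
      · have hsub : Finset.range (⌊c⌋₊ + 1) ⊆
            (Finset.range (2^n)).filter (fun i : ℕ => (i:ℝ) ≤ c) := by
          intro i hi
          have hi' : i ≤ ⌊c⌋₊ := Nat.lt_succ_iff.1 (Finset.mem_range.1 hi)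
          have hile : (i:ℝ) ≤ c := le_trans (by exact_mod_cast hi') (Nat.floor_le hcp)
          refine Finset.mem_filter.2 ⟨Finset.mem_range.2 ?_, hile⟩
          have : (i:ℝ) < 2^n := by
            rw [hc] at hile
            have := hy.2
            nlinarith
          exact_mod_cast this
        have hcard := Finset.card_le_card hsub
        rw [Finset.card_range] at hcard
        have h1 : c < (⌊c⌋₊ : ℝ) + 1 := Nat.lt_floor_add_one c
        have h2' : ((⌊c⌋₊ + 1 : ℕ):ℝ) ≤ (((Finset.range (2^n)).filter (fun i : ℕ => (i:ℝ) ≤ c)).card : ℝ) :=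
          Nat.cast_le.2 hcard
        push_cast at h2'
        rw [hc] at h1
        linarith
    rw [cdKernelT, le_div_iff₀ h2]
    have := le_trans step2 step1
    linarith [mul_comm ((2:ℝ)^n) y, (by ring : (y - 1/2^n) * 2^n = 2^n * y - 1/2^n * 2^n),
      (by field_simp : (1:ℝ)/2^n * 2^n = 1)]
  · -- upper bound
    have h2 : (0:ℝ) < 2 ^ n := by positivity
    set c : ℝ := 2^n * y with hc
    have step1 : (∑ i ∈ Finset.range (2 ^ n), if (x + (i:ℝ)) / 2 ^ n ≤ y then (1:ℝ) else 0)
        ≤ ∑ i ∈ Finset.range (2 ^ n), if (i:ℝ) ≤ c then (1:ℝ) else 0 := by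
      refine Finset.sum_le_sum (fun i _ => ?_)
      by_cases h : (x + (i:ℝ)) / 2 ^ n ≤ y
      · rw [if_pos h, if_pos]
        rw [div_le_iff₀ h2] at h
        have := hx.1
        rw [hc]
        linarith
      · rw [if_neg h]
        split_ifs <;> norm_num
    have step2 : (∑ i ∈ Finset.range (2 ^ n), if (i:ℝ) ≤ c then (1:ℝ) else 0) ≤ 2^n * y + 1 := by
      rw [sum_ite_eq_card]
      have hcp : (0:ℝ) ≤ c := by rw [hc]; have := hy.1; positivity
      have hsub : (Finset.range (2^n)).filter (fun i : ℕ => (i:ℝ) ≤ c) ⊆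
          Finset.range (⌊c⌋₊ + 1) := by
        intro i hi
        have := (Finset.mem_filter.1 hi).2
        exact Finset.mem_range.2 (Nat.lt_succ_iff.2 (Nat.le_floor this))
      have hcard := Finset.card_le_card hsub
      rw [Finset.card_range] at hcard
      have h1 : (⌊c⌋₊ : ℝ) ≤ c := Nat.floor_le hcp
      have h2' : (((Finset.range (2^n)).filter (fun i : ℕ => (i:ℝ) ≤ c)).card : ℝ)
          ≤ ((⌊c⌋₊ + 1 : ℕ) : ℝ) := Nat.cast_le.2 hcard
      push_cast at h2'
      rw [hc] at h1
      linarith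
    rw [cdKernelT, div_le_iff₀ h2]
    have := le_trans step1 step2
    have hexp : (y + 1/2^n) * 2^n = 2^n * y + 1 := by field_simp
    linarith

lemma D1_eq (n : ℕ) : D1 (cdKernel n) piKernel = 1 / 3 := by
  have hcong : ∀ y ∈ Icc (0:ℝ) 1,
      (∫ x in Icc (0:ℝ) 1, |cdKernel n x y - piKernel x y|) = 2*y - 2*y^2 := by
    intro y hy
    have hA : MeasurableSet {x : ℝ | hmap n x ≤ y} :=
      measurableSet_le (hmap_measurable n) measurable_const
    have hpt : ∀ x, |cdKernel n x y - piKernel x y|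
        = y + Set.indicator {x : ℝ | hmap n x ≤ y} (fun _ => 1 - 2*y) x := by
      intro x
      by_cases hx : hmap n x ≤ y
      · simp only [Set.indicator, mem_setOf_eq, hx, if_true, cdKernel, if_pos hx, piKernel]
        rw [abs_of_nonneg (by linarith [hy.2])]
        ring
      · simp only [Set.indicator, mem_setOf_eq, hx, if_false, cdKernel, if_neg hx, piKernel,
          add_zero]
        rw [zero_sub, abs_neg, abs_of_nonneg hy.1]
    simp_rw [hpt]
    rw [integral_add (integrable_const y)
      ((integrable_indicator_iff hA).2 (integrableOn_const (by
        rw [Measure.restrict_apply hA]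
        exact (lt_of_le_of_lt (measure_mono inter_subset_right) measure_Icc_lt_top).ne)))]
    rw [setIntegral_const, integral_indicator_const _ hA, measureReal_def, measureReal_def,
      Measure.restrict_apply hA]
    have hset : {x : ℝ | hmap n x ≤ y} ∩ Icc 0 1 = {t | t ∈ Icc (0:ℝ) 1 ∧ hmap n t ≤ y} := by
      ext t; simp [and_comm]
    rw [hset, volume_hmap_le n hy, Real.volume_Icc, sub_zero, ENNReal.ofReal_one,
      ENNReal.toReal_one, ENNReal.toReal_ofReal hy.1, one_smul, smul_eq_mul]
    ring
  rw [D1, setIntegral_congr_fun measurableSet_Icc hcong,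
    MeasureTheory.integral_Icc_eq_integral_Ioc,
    ← intervalIntegral.integral_of_le (zero_le_one)]
  have h1 : IntervalIntegrable (fun y : ℝ => 2*y) volume 0 1 :=
    (continuous_const.mul continuous_id).intervalIntegrable _ _
  have h2 : IntervalIntegrable (fun y : ℝ => 2*y^2) volume 0 1 :=
    (continuous_const.mul (continuous_pow 2)).intervalIntegrable _ _
  rw [show (fun y : ℝ => 2*y - 2*y^2) = fun y : ℝ => (fun z : ℝ => 2*z) y - (fun z : ℝ => 2*z^2) y from rfl,
    intervalIntegral.integral_sub h1 h2, intervalIntegral.integral_const_mul,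
    intervalIntegral.integral_const_mul, integral_id, integral_pow]
  norm_num

/-- With `h_n(x) = 2ⁿx (mod 1)`, `C_n` the completely dependent copula
with kernel `K_{C_n}(x,[0,y]) = 1_{[0,y]}(h_n(x))`:
(i) `h_n` preserves Lebesgue measure on `[0,1]`; the Markov kernel of the transposed
copula `C_nᵗ` at `x` is the discrete uniform distribution on
`{x/2ⁿ + i/2ⁿ : i ∈ {0,…,2ⁿ−1}}`, these converge weakly to Lebesgue measure on `[0,1]`,
and hence `(C_nᵗ)` converges weakly conditional to `Π`;
(ii) `D₁(C_n, Π) = 1/3` for every `n`, and `(C_n)` converges to `Π` neither weakly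
conditional nor w.r.t. `D₁`; in particular weak conditional convergence is not a
symmetric concept. -/
theorem stmt18 :
    (∀ n, MeasurePreserving (hmap n)
      (volume.restrict (Set.Icc (0:ℝ) 1)) (volume.restrict (Set.Icc (0:ℝ) 1))) ∧
    (∀ n, IsMarkovKernelOf (cdCopula n) (cdKernel n)) ∧
    (∀ n, IsMarkovKernelOf (cdCopulaT n) (cdKernelT n)) ∧
    (∀ n, ∀ x ∈ Set.Icc (0:ℝ) 1, ∀ y ∈ Set.Icc (0:ℝ) 1,
      (cdMeasureT n x (Set.Icc (0:ℝ) y)).toReal = cdKernelT n x y) ∧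
    (∀ x ∈ Set.Icc (0:ℝ) 1, ∀ f : BoundedContinuousFunction ℝ ℝ,
      Filter.Tendsto (fun n => ∫ t, f t ∂(cdMeasureT n x)) Filter.atTop
        (nhds (∫ t in Set.Icc (0:ℝ) 1, f t))) ∧
    WeakCondConv cdKernelT piKernel ∧
    (∀ n, D1 (cdKernel n) piKernel = 1 / 3) ∧
    ¬ WeakCondConv cdKernel piKernel ∧
    ¬ Filter.Tendsto (fun n => D1 (cdKernel n) piKernel) Filter.atTop (nhds 0) := by
  refine ⟨hmap_measurePreserving, ?_, ?_, ?_, ?_, ?_, D1_eq, ?_, ?_⟩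
  · -- Markov kernel of C_n
    intro n
    refine ⟨(cdKernel_markov n).1, ?_, ?_, ?_, fun a ha y hy => (cdKernel_markov n).2 a ha y hy⟩
    · intro x _ y1 _ y2 _ h
      unfold cdKernel
      by_cases h1 : hmap n x ≤ y1
      · rw [if_pos h1, if_pos (h1.trans h)]
      · rw [if_neg h1]; split_ifs <;> norm_num
    · intro x _ y _
      unfold cdKernel; split_ifs <;> norm_num
    · intro x _
      unfold cdKernel; rw [if_pos (hmap_lt_one n x).le]
  · -- Markov kernel of C_n transposed
    intro n
    have h2 : (0:ℝ) < 2 ^ n := by positivity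
    refine ⟨fun y _ => cdKernelT_measurable n y, ?_, ?_,
      fun x hx => cdKernelT_apply_one n hx, fun a ha y hy => cdKernelT_disint n ha hy⟩
    · intro x _ y1 _ y2 _ h
      unfold cdKernelT
      refine (div_le_div_iff_of_pos_right h2).mpr ?_
      refine Finset.sum_le_sum (fun i _ => ?_)
      by_cases h1 : (x + (i:ℝ)) / 2 ^ n ≤ y1
      · rw [if_pos h1, if_pos (h1.trans h)]
      · rw [if_neg h1]; split_ifs <;> norm_num
    · intro x _ y _
      unfold cdKernelT
      exact div_nonneg (Finset.sum_nonneg fun i _ => by split_ifs <;> norm_num) h2.le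
  · -- evaluation of cdMeasureT
    intro n x hx y hy
    exact cdMeasureT_eval n hx hy
  · -- weak convergence of measures
    intro x hx f
    have heq : (fun n => ∫ t, f t ∂(cdMeasureT n x))
        = fun n => (∑ i ∈ Finset.range (2 ^ n), f ((x + (i:ℝ)) / 2 ^ n)) / 2 ^ n :=
      funext (fun n => integral_cdMeasureT n x f)
    rw [heq]
    exact riemann_sum_tendsto hx f
  · -- weak conditional convergence of the transposed copulas
    refine Filter.eventually_of_mem (self_mem_ae_restrict measurableSet_Icc)
      (fun x hx y hy _ => ?_)
    exact cdKernelT_tendsto hx hy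
  · -- no weak conditional convergence of C_n
    intro h
    have hne : (volume.restrict (Set.Icc (0:ℝ) 1)) ≠ 0 := by
      intro h0
      have h1 : (volume.restrict (Set.Icc (0:ℝ) 1)) univ = 0 := by rw [h0]; simp
      rw [Measure.restrict_apply_univ, Real.volume_Icc] at h1
      norm_num at h1
    haveI : (ae (volume.restrict (Set.Icc (0:ℝ) 1))).NeBot := ae_neBot.2 hne
    obtain ⟨x, hx⟩ := h.exists
    have ht := hx (1/2) (by norm_num) (continuousWithinAt_id)
    obtain ⟨N, hN⟩ := (Metric.tendsto_atTop.1 ht) (1/4) (by norm_num)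
    have hd : dist (cdKernel N x (1/2)) ((fun t => piKernel x t) (1/2) : ℝ) = 1/2 := by
      unfold cdKernel piKernel
      split_ifs <;> rw [Real.dist_eq] <;> norm_num
    have := hN N le_rfl
    rw [hd] at this
    norm_num at this
  · -- no D1-convergence to 0
    intro h
    have heq : (fun n => D1 (cdKernel n) piKernel) = fun _ => (1/3 : ℝ) := funext D1_eq
    rw [heq] at h
    have := tendsto_nhds_unique h tendsto_const_nhds
    norm_num at this
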